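/- Every similarity class of a non-real quaternion λ contains exactly two complex numbers, and these two complex numbers are conjugates of each other: there exists a unique pair {z, z̄} ⊂ ℂ ⊂ ℍ with z ∉ ℝ such that q⁻¹λq = z for some nonzero quaternion q. -/

import Mathlib

/-- The embedding of `ℂ` in the quaternions `ℍ` as the span of `1` and `i`. -/
noncomputable def complexToQuat (z : ℂ) : Quaternion ℝ := ⟨z.re, z.im, 0, 0⟩

/-- Helper constructor staying in `Quaternion ℝ`. -/
noncomputable def quat4 (a b c d : ℝ) : Quaternion ℝ := ⟨a, b, c, d⟩

@[simp] lemma quat4_re (a b c d : ℝ) : (quat4 a b c d).re = a := rfl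
@[simp] lemma quat4_imI (a b c d : ℝ) : (quat4 a b c d).imI = b := rfl
@[simp] lemma quat4_imJ (a b c d : ℝ) : (quat4 a b c d).imJ = c := rfl
@[simp] lemma quat4_imK (a b c d : ℝ) : (quat4 a b c d).imK = d := rfl

lemma quat4_eq_zero_iff (a b c d : ℝ) :
    quat4 a b c d = 0 ↔ a = 0 ∧ b = 0 ∧ c = 0 ∧ d = 0 := by
  constructor
  · intro h
    refine ⟨?_, ?_, ?_, ?_⟩
    · exact (congrArg QuaternionAlgebra.re h : a = 0)
    · exact (congrArg QuaternionAlgebra.imI h : b = 0)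
    · exact (congrArg QuaternionAlgebra.imJ h : c = 0)
    · exact (congrArg QuaternionAlgebra.imK h : d = 0)
  · rintro ⟨rfl, rfl, rfl, rfl⟩
    apply Quaternion.ext <;> rfl

lemma quat_re_mul_comm (a b : Quaternion ℝ) : (a * b).re = (b * a).re := by
  simp [Quaternion.re_mul]; ring

lemma quat_conj_eq_iff (q lam c : Quaternion ℝ) (hq : q ≠ 0) :
    q⁻¹ * lam * q = c ↔ lam * q = q * c := by
  constructor
  · intro h
    have := congrArg (fun x => q * x) h
    simpa [mul_assoc, mul_inv_cancel₀ hq, ← mul_assoc] using this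
  · intro h
    have := congrArg (fun x => q⁻¹ * x) h
    simpa [mul_assoc, inv_mul_cancel₀ hq, ← mul_assoc] using this

lemma conj_components (a b c d s : ℝ) (hs2 : s^2 = b^2+c^2+d^2) :
    quat4 a b c d * quat4 (s+b) 0 (-d) c = quat4 (s+b) 0 (-d) c * quat4 a s 0 0 := by
  apply Quaternion.ext <;>
    simp only [Quaternion.re_mul, Quaternion.imI_mul, Quaternion.imJ_mul,
      Quaternion.imK_mul, quat4_re, quat4_imI, quat4_imJ, quat4_imK]
  · ring
  · linear_combination -hs2
  · ring
  · ring

lemma conj_components_deg (a s : ℝ) :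
    quat4 a (-s) 0 0 * quat4 0 0 1 0 = quat4 0 0 1 0 * quat4 a s 0 0 := by
  apply Quaternion.ext <;>
    simp only [Quaternion.re_mul, Quaternion.imI_mul, Quaternion.imJ_mul,
      Quaternion.imK_mul, quat4_re, quat4_imI, quat4_imJ, quat4_imK] <;> ring

lemma J_swap (z : ℂ) :
    complexToQuat z * quat4 0 0 1 0 = quat4 0 0 1 0 * complexToQuat (starRingEnd ℂ z) := by
  have h1 : complexToQuat z = quat4 z.re z.im 0 0 := rfl
  have h2 : complexToQuat (starRingEnd ℂ z) = quat4 z.re (-z.im) 0 0 := rfl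
  rw [h1, h2]
  apply Quaternion.ext <;>
    simp only [Quaternion.re_mul, Quaternion.imI_mul, Quaternion.imJ_mul,
      Quaternion.imK_mul, quat4_re, quat4_imI, quat4_imJ, quat4_imK] <;> ring

lemma quatJ_ne_zero : quat4 0 0 1 0 ≠ 0 := by
  intro h
  have := (quat4_eq_zero_iff 0 0 1 0).mp h
  exact one_ne_zero this.2.2.1

lemma normSq_quat4 (a b c d : ℝ) :
    Quaternion.normSq (quat4 a b c d) = a^2 + b^2 + c^2 + d^2 := by
  rw [Quaternion.normSq_def']
  simp only [quat4_re, quat4_imI, quat4_imJ, quat4_imK]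

/-- Every similarity class of a non-real quaternion `λ` contains exactly two
complex numbers, and these two complex numbers are conjugates of each other. -/
theorem similarity_class_complex_pair (lam : Quaternion ℝ)
    (hlam : lam.imI ≠ 0 ∨ lam.imJ ≠ 0 ∨ lam.imK ≠ 0) :
    ∃ z : ℂ, z.im ≠ 0 ∧
      (∃ q : Quaternion ℝ, q ≠ 0 ∧ q⁻¹ * lam * q = complexToQuat z) ∧
      (∃ q : Quaternion ℝ, q ≠ 0 ∧ q⁻¹ * lam * q = complexToQuat (starRingEnd ℂ z)) ∧
      (∀ w : ℂ, (∃ q : Quaternion ℝ, q ≠ 0 ∧ q⁻¹ * lam * q = complexToQuat w) →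
        w = z ∨ w = starRingEnd ℂ z) := by
  set a := lam.re with ha
  set b := lam.imI with hb
  set c := lam.imJ with hc
  set d := lam.imK with hd
  have hpos : (0:ℝ) < b^2 + c^2 + d^2 := by
    rcases hlam with h | h | h <;> positivity
  set s : ℝ := Real.sqrt (b^2 + c^2 + d^2) with hsdef
  have hs2 : s^2 = b^2 + c^2 + d^2 := Real.sq_sqrt hpos.le
  have hs : 0 < s := Real.sqrt_pos.mpr hpos
  have hlam_ext : lam = quat4 a b c d := rfl
  set z : ℂ := ⟨a, s⟩ with hz
  have hzq : complexToQuat z = quat4 a s 0 0 := rfl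
  -- first conjugator
  have hmain : ∃ q : Quaternion ℝ, q ≠ 0 ∧ q⁻¹ * lam * q = complexToQuat z := by
    by_cases hdeg : c = 0 ∧ d = 0 ∧ b = -s
    · refine ⟨quat4 0 0 1 0, quatJ_ne_zero, ?_⟩
      rw [quat_conj_eq_iff _ _ _ quatJ_ne_zero, hzq]
      obtain ⟨h1, h2, h3⟩ := hdeg
      rw [hlam_ext, h1, h2, h3]
      exact conj_components_deg a s
    · have hq0 : quat4 (s + b) 0 (-d) c ≠ 0 := by
        intro h
        obtain ⟨e1, _, e3, e4⟩ := (quat4_eq_zero_iff _ _ _ _).mp h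
        exact hdeg ⟨e4, neg_eq_zero.mp e3, by linarith⟩
      refine ⟨quat4 (s + b) 0 (-d) c, hq0, ?_⟩
      rw [quat_conj_eq_iff _ _ _ hq0, hzq, hlam_ext]
      exact conj_components a b c d s hs2
  obtain ⟨q, hq, hconj⟩ := hmain
  refine ⟨z, by simpa [hz] using hs.ne', ⟨q, hq, hconj⟩, ?_, ?_⟩
  · -- conjugate further by j
    refine ⟨q * quat4 0 0 1 0, mul_ne_zero hq quatJ_ne_zero, ?_⟩
    rw [quat_conj_eq_iff _ _ _ (mul_ne_zero hq quatJ_ne_zero)]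
    have h1 : lam * q = q * complexToQuat z := (quat_conj_eq_iff _ _ _ hq).mp hconj
    calc lam * (q * quat4 0 0 1 0)
        = (lam * q) * quat4 0 0 1 0 := by rw [mul_assoc]
      _ = q * (complexToQuat z * quat4 0 0 1 0) := by rw [h1, mul_assoc]
      _ = q * (quat4 0 0 1 0 * complexToQuat (starRingEnd ℂ z)) := by rw [J_swap]
      _ = q * quat4 0 0 1 0 * complexToQuat (starRingEnd ℂ z) := by rw [mul_assoc]
  · rintro w ⟨p, hp, hpw⟩
    have hre : w.re = a := by
      have h1 : (p⁻¹ * lam * p).re = lam.re := by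
        rw [quat_re_mul_comm (p⁻¹ * lam) p, ← mul_assoc, mul_inv_cancel₀ hp, one_mul]
      rw [hpw] at h1
      simpa [complexToQuat] using h1
    have hnorm : Quaternion.normSq (complexToQuat w) = Quaternion.normSq lam := by
      rw [← hpw]
      have hnp : Quaternion.normSq p ≠ 0 := by
        simpa [Quaternion.normSq_eq_zero] using hp
      rw [map_mul, map_mul, map_inv₀]
      field_simp
    have hn1 : Quaternion.normSq (complexToQuat w) = w.re^2 + w.im^2 := by
      have : complexToQuat w = quat4 w.re w.im 0 0 := rfl
      rw [this, normSq_quat4]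
      ring
    have hn2 : Quaternion.normSq lam = a^2 + b^2 + c^2 + d^2 := by
      rw [hlam_ext, normSq_quat4]
    have him2 : w.im^2 = s^2 := by
      rw [hn1, hn2, hre] at hnorm
      rw [hs2]; linarith
    have hprod : (w.im - s) * (w.im + s) = 0 := by linear_combination him2
    rcases mul_eq_zero.mp hprod with h | h
    · left
      apply Complex.ext
      · exact hre
      · show w.im = s
        linarith
    · right
      apply Complex.ext
      · simpa using hre
      · show w.im = -s
        linarith
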